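/- For distinct points c_1, …, c_m in ℝ^n and objectives f_i(x) = ‖x − c_i‖², every point of the convex hull of {c_1, …, c_m} is weakly Pareto optimal. -/

import Mathlib

open RealInnerProductSpace

theorem convexHull_subset_weakPareto {n m : ℕ}
    (c : Fin m → EuclideanSpace ℝ (Fin n)) (hc : Function.Injective c)
    (x : EuclideanSpace ℝ (Fin n)) (hx : x ∈ convexHull ℝ (Set.range c)) :
    ∀ y : EuclideanSpace ℝ (Fin n), ∃ i, ‖x - c i‖ ^ 2 ≤ ‖y - c i‖ ^ 2 := by
  intro y
  by_contra h
  push_neg at h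
  -- every c i lies in the open halfspace S
  have hlin : IsLinearMap ℝ (fun z : EuclideanSpace ℝ (Fin n) => 2 * ⟪y - x, z⟫) := by
    constructor
    · intro a b; rw [inner_add_right]; ring
    · intro r a; rw [real_inner_smul_right]; simp [smul_eq_mul]; ring
  have hconv : Convex ℝ {z : EuclideanSpace ℝ (Fin n) |
      ‖y‖ ^ 2 - ‖x‖ ^ 2 < 2 * ⟪y - x, z⟫} := convex_halfSpace_gt hlin _
  have hsub : Set.range c ⊆ {z : EuclideanSpace ℝ (Fin n) |
      ‖y‖ ^ 2 - ‖x‖ ^ 2 < 2 * ⟪y - x, z⟫} := by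
    rintro _ ⟨i, rfl⟩
    have hi := h i
    rw [norm_sub_sq_real, norm_sub_sq_real] at hi
    simp only [Set.mem_setOf_eq, inner_sub_left]
    linarith
  have hxS := convexHull_min hsub hconv hx
  simp only [Set.mem_setOf_eq, inner_sub_left, real_inner_self_eq_norm_sq] at hxS
  have h0 : (0:ℝ) ≤ ‖y - x‖ ^ 2 := sq_nonneg _
  rw [norm_sub_sq_real] at h0
  have : ⟪y, x⟫ = ⟪x, y⟫ := real_inner_comm x y
  linarith
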